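/- Let {T_n} be the tribonacci numbers. For every integer n ≥ 2, the Toeplitz–Hessenberg determinant det(−1; T_0, T_2, T_4, …, T_{2n−2}) (an n×n determinant whose subdiagonal entries are the even-indexed tribonacci numbers) equals, as a real number, ((17 + √17)/34)·((3 + √17)/2)^{ n−2} + ((17 − √17)/34)·((3 − √17)/2)^{ n−2}. -/

import Mathlib

set_option maxHeartbeats 1000000

/-- The determinant of the `n × n` Toeplitz–Hessenberg matrix whose `(i,j)` entry
(0-indexed) is `a (i - j + 1)` when `j ≤ i + 1` (so `a 0` lies on the superdiagonal
and `a k` on the `k`-th subdiagonal) and `0` otherwise. -/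
def THdet (a : ℕ → ℤ) (n : ℕ) : ℤ :=
  (Matrix.of fun i j : Fin n => if (j : ℕ) ≤ (i : ℕ) + 1 then a ((i : ℕ) + 1 - (j : ℕ)) else 0).det

/-- The tribonacci numbers: `T 0 = T 1 = 0`, `T 2 = 1`,
`T n = T (n-1) + T (n-2) + T (n-3)` for `n ≥ 3`. -/
def trib : ℕ → ℤ
  | 0 => 0
  | 1 => 0
  | 2 => 1
  | n + 3 => trib (n + 2) + trib (n + 1) + trib n

/-- Hessenberg determinant with the first column shifted by `p`. -/
def Dm (a : ℕ → ℤ) (p n : ℕ) : ℤ :=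
  (Matrix.of fun i j : Fin n =>
    if (j : ℕ) = 0 then a ((i : ℕ) + 1 + p)
    else if (j : ℕ) ≤ (i : ℕ) + 1 then a ((i : ℕ) + 1 - (j : ℕ)) else 0).det

lemma Dm_one (a : ℕ → ℤ) (p : ℕ) : Dm a p 1 = a (p + 1) := by
  simp [Dm, Matrix.det_fin_one, Nat.add_comm]

lemma Dm_succ (a : ℕ → ℤ) (p n : ℕ) :
    Dm a p (n + 2) = a (p + 1) * Dm a 0 (n + 1) - a 0 * Dm a (p + 1) (n + 1) := by
  have hsa : ∀ c : Fin (n + 1), (((1 : Fin (n + 2)).succAbove c) : ℕ)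
      = if (c : ℕ) = 0 then 0 else (c : ℕ) + 1 := by
    intro c
    rw [Fin.succAbove]
    rcases eq_or_ne (c : ℕ) 0 with h | h
    · rw [if_pos, if_pos h] <;> simp [Fin.lt_def, h]
    · rw [if_neg, if_neg h] <;> simp [Fin.lt_def] <;> exact fun e => h (by simp [e])
  have h0 : ((Matrix.of fun i j : Fin (n+2) =>
      if (j : ℕ) = 0 then a ((i : ℕ) + 1 + p)
      else if (j : ℕ) ≤ (i : ℕ) + 1 then a ((i : ℕ) + 1 - (j : ℕ)) else 0).submatrix
        Fin.succ (Fin.succAbove 0)).det = Dm a 0 (n + 1) := by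
    rw [Dm]
    congr 1
    ext r c
    simp only [Matrix.submatrix_apply, Matrix.of_apply, Fin.succAbove_zero, Fin.val_succ]
    split_ifs <;> first | contradiction | (congr 1; omega) | omega | rfl
  have h1 : ((Matrix.of fun i j : Fin (n+2) =>
      if (j : ℕ) = 0 then a ((i : ℕ) + 1 + p)
      else if (j : ℕ) ≤ (i : ℕ) + 1 then a ((i : ℕ) + 1 - (j : ℕ)) else 0).submatrix
        Fin.succ (Fin.succAbove 1)).det = Dm a (p + 1) (n + 1) := by
    rw [Dm]
    congr 1
    ext r c
    simp only [Matrix.submatrix_apply, Matrix.of_apply, Fin.val_succ, hsa]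
    split_ifs <;> first | contradiction | (congr 1; omega) | omega | rfl
  rw [Dm, Matrix.det_succ_row_zero, Fin.sum_univ_succ, Fin.sum_univ_succ]
  simp only [Matrix.of_apply]
  rw [Finset.sum_eq_zero, h0]
  · have e1 : (Fin.succ (0 : Fin (n+1))) = (1 : Fin (n+2)) := rfl
    rw [e1, h1]
    simp only [Fin.val_zero, pow_zero, pow_one]
    norm_num
    rw [Nat.add_comm 1 p]
    ring
  · intro x _
    have : ((x.succ.succ : Fin (n+2)) : ℕ) = (x : ℕ) + 2 := by simp
    rw [this]
    simp only [Fin.val_zero]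
    simp only [show ¬ ((x : ℕ) + 2 = 0) by omega, show ¬ ((x : ℕ) + 2 ≤ 0 + 1) by omega, if_false]
    ring

lemma trib_rec (m : ℕ) : trib (m + 3) = trib (m + 2) + trib (m + 1) + trib m := rfl

lemma trib_six (m : ℕ) : trib (m + 6) = 3 * trib (m + 4) + trib (m + 2) + trib m := by
  have e3 := trib_rec m
  have e4 : trib (m + 4) = trib (m + 3) + trib (m + 2) + trib (m + 1) := by
    simpa using trib_rec (m + 1)
  have e5 : trib (m + 5) = trib (m + 4) + trib (m + 3) + trib (m + 2) := by
    simpa using trib_rec (m + 2)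
  have e6 : trib (m + 6) = trib (m + 5) + trib (m + 4) + trib (m + 3) := by
    simpa using trib_rec (m + 3)
  linarith

/-- The sequence of subdiagonal entries. -/
def aa : ℕ → ℤ := fun k => if k = 0 then -1 else trib (2 * k - 2)

lemma aa_succ (k : ℕ) : aa (k + 1) = trib (2 * k) := by
  show (if k + 1 = 0 then (-1 : ℤ) else trib (2 * (k + 1) - 2)) = trib (2 * k)
  rw [if_neg (Nat.succ_ne_zero k), show 2 * (k + 1) - 2 = 2 * k from by omega]

lemma aa_shift (k : ℕ) : aa (k + 4) = 3 * aa (k + 3) + aa (k + 2) + aa (k + 1) := by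
  have h4 : aa (k + 4) = trib (2 * k + 6) := by
    rw [show k+4 = (k+3)+1 from rfl, aa_succ, show 2 * (k+3) = 2 * k + 6 from by omega]
  have h3 : aa (k + 3) = trib (2 * k + 4) := by
    rw [show k+3 = (k+2)+1 from rfl, aa_succ, show 2 * (k+2) = 2 * k + 4 from by omega]
  have h2 : aa (k + 2) = trib (2 * k + 2) := by
    rw [show k+2 = (k+1)+1 from rfl, aa_succ, show 2 * (k+1) = 2 * k + 2 from by omega]
  have h1 : aa (k + 1) = trib (2 * k) := aa_succ k
  rw [h1, h2, h3, h4, trib_six]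

lemma aa0 : aa 0 = -1 := rfl
lemma aa1 : aa 1 = 0 := by decide
lemma aa2 : aa 2 = 1 := by decide
lemma aa3 : aa 3 = 2 := by decide

lemma Dm_shift3 (n : ℕ) : ∀ p : ℕ, Dm aa (p + 3) (n + 1)
    = 3 * Dm aa (p + 2) (n + 1) + Dm aa (p + 1) (n + 1) + Dm aa p (n + 1) := by
  induction n with
  | zero =>
    intro p
    rw [Dm_one, Dm_one, Dm_one, Dm_one]
    have := aa_shift p
    convert this using 3 <;> omega
  | succ n ih =>
    intro p
    show Dm aa (p + 3) (n + 2) = 3 * Dm aa (p + 2) (n + 2) + Dm aa (p + 1) (n + 2) + Dm aa p (n + 2)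
    have e0 := Dm_succ aa p n
    have e1 := Dm_succ aa (p + 1) n
    have e2 := Dm_succ aa (p + 2) n
    have e3 := Dm_succ aa (p + 3) n
    have hsh := aa_shift p
    have hih := ih (p + 1)
    rw [aa0] at e0 e1 e2 e3
    have r0 : p + 1 + 1 = p + 2 := by omega
    have r1 : p + 2 + 1 = p + 3 := by omega
    have r2 : p + 3 + 1 = p + 4 := by omega
    rw [r0] at e1
    rw [r1] at e2
    rw [r2] at e3
    have r3 : p + 1 + 3 = p + 4 := by omega
    have r4 : p + 1 + 2 = p + 3 := by omega
    have r5 : p + 1 + 1 = p + 2 := by omega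
    rw [r3, r4, r5] at hih
    rw [hsh] at e3
    linarith

lemma Dm_rec (m : ℕ) : Dm aa 0 (m + 4) = 3 * Dm aa 0 (m + 3) + 2 * Dm aa 0 (m + 2) := by
  have h1 : Dm aa 0 (m + 4) = Dm aa 1 (m + 3) := by
    have := Dm_succ aa 0 (m + 2)
    rw [aa0, aa1] at this
    simpa using this
  have h2 : Dm aa 1 (m + 3) = Dm aa 0 (m + 2) + Dm aa 2 (m + 2) := by
    have := Dm_succ aa 1 (m + 1)
    rw [aa0, aa2] at this
    simpa using this
  have h3 : Dm aa 2 (m + 2) = 2 * Dm aa 0 (m + 1) + Dm aa 3 (m + 1) := by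
    have := Dm_succ aa 2 m
    rw [aa0, aa3] at this
    simpa using this
  have h4 : Dm aa 3 (m + 1) = 3 * Dm aa 2 (m + 1) + Dm aa 1 (m + 1) + Dm aa 0 (m + 1) := by
    simpa using Dm_shift3 m 0
  have h5 : Dm aa 0 (m + 3) = Dm aa 1 (m + 2) := by
    have := Dm_succ aa 0 (m + 1)
    rw [aa0, aa1] at this
    simpa using this
  have h6 : Dm aa 1 (m + 2) = Dm aa 0 (m + 1) + Dm aa 2 (m + 1) := by
    have := Dm_succ aa 1 m
    rw [aa0, aa2] at this
    simpa using this
  have h7 : Dm aa 0 (m + 2) = Dm aa 1 (m + 1) := by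
    have := Dm_succ aa 0 m
    rw [aa0, aa1] at this
    simpa using this
  linarith

lemma Dm_two : Dm aa 0 2 = 1 := by
  have := Dm_succ aa 0 0
  rw [aa0, aa1, Dm_one, Dm_one, aa2] at this
  simpa using this

lemma Dm_three : Dm aa 0 3 = 2 := by
  have h1 := Dm_succ aa 0 1
  have h2 := Dm_succ aa 1 0
  rw [aa0, aa1] at h1
  rw [aa0, aa2, Dm_one, Dm_one, aa1] at h2
  simp at h1 h2
  rw [h1, h2, aa3]

lemma closed_form (m : ℕ) : ((Dm aa 0 (m + 2) : ℤ) : ℝ) =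
    (17 + Real.sqrt 17) / 34 * ((3 + Real.sqrt 17) / 2) ^ m +
      (17 - Real.sqrt 17) / 34 * ((3 - Real.sqrt 17) / 2) ^ m := by
  have hs : Real.sqrt 17 ^ 2 = 17 := Real.sq_sqrt (by norm_num)
  induction m using Nat.twoStepInduction with
  | zero =>
    rw [Dm_two]
    push_cast
    ring
  | one =>
    rw [Dm_three]
    push_cast
    field_simp
    nlinarith [hs]
  | more n ih1 ih2 =>
    have hrec := Dm_rec n
    have : ((Dm aa 0 (n + 4) : ℤ) : ℝ)
        = 3 * ((Dm aa 0 (n + 3) : ℤ) : ℝ) + 2 * ((Dm aa 0 (n + 2) : ℤ) : ℝ) := by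
      exact_mod_cast congrArg (fun z : ℤ => (z : ℝ)) hrec
    rw [show n + 2 + 2 = n + 4 from rfl, this,
      show n + 3 = (n + 1) + 2 from rfl, ih2, ih1]
    have hα : ((3 + Real.sqrt 17) / 2) ^ 2 = 3 * ((3 + Real.sqrt 17) / 2) + 2 := by
      nlinarith [hs]
    have hβ : ((3 - Real.sqrt 17) / 2) ^ 2 = 3 * ((3 - Real.sqrt 17) / 2) + 2 := by
      nlinarith [hs]
    rw [show n + 2 = n + 2 from rfl]
    rw [pow_add, pow_add, pow_one, pow_one, pow_add, pow_add]
    linear_combination (-(17 + Real.sqrt 17) / 34 * ((3 + Real.sqrt 17) / 2) ^ n) * hα +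
      (-(17 - Real.sqrt 17) / 34 * ((3 - Real.sqrt 17) / 2) ^ n) * hβ

lemma THdet_eq_Dm (n : ℕ) : THdet aa n = Dm aa 0 n := by
  rw [THdet, Dm]
  congr 1
  ext i j
  rcases eq_or_ne (j : ℕ) 0 with h | h
  · simp [h]
  · simp [h]

theorem stmt_3 (n : ℕ) (hn : 2 ≤ n) :
    ((THdet (fun k => if k = 0 then -1 else trib (2 * k - 2)) n : ℤ) : ℝ) =
      (17 + Real.sqrt 17) / 34 * ((3 + Real.sqrt 17) / 2) ^ (n - 2) +
        (17 - Real.sqrt 17) / 34 * ((3 - Real.sqrt 17) / 2) ^ (n - 2) := by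
  obtain ⟨m, rfl⟩ : ∃ m, n = m + 2 := ⟨n - 2, by omega⟩
  have : (fun k => if k = 0 then (-1 : ℤ) else trib (2 * k - 2)) = aa := rfl
  rw [this, THdet_eq_Dm, Nat.add_sub_cancel]
  exact closed_form m
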